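/- arXiv:2006.11866 — 2 statements merged into one kernel-verified Lean document; each statement's English description precedes it below -/
import Mathlib

section
/- For multiplicative characters A, B, C on F_q: (A choose B)·(C choose A) = (C choose B)·(C·B̄ choose A·B̄) - ((q-1)/q²)·B(-1)·δ(A) + ((q-1)/q²)·A·B(-1)·δ(B·C̄). -/
open Finset

variable {F : Type*} [Field F] [Fintype F] [DecidableEq F]

noncomputable instance : Fintype (MulChar F ℂ) := Fintype.ofFinite _

/-- Greene's binomial coefficient `(A choose B) = B(-1)/q * J(A, B⁻¹)`. -/
noncomputable def greeneBinom (A B : MulChar F ℂ) : ℂ :=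
  B (-1) / (Fintype.card F : ℂ) * ∑ x : F, A x * B⁻¹ (1 - x)

/-- Greene's finite field hypergeometric series ₂F₁. -/
noncomputable def greeneF21 (A B C : MulChar F ℂ) (x : F) : ℂ :=
  ((Fintype.card F : ℂ) / ((Fintype.card F : ℂ) - 1)) *
    ∑ χ : MulChar F ℂ, greeneBinom (A * χ) χ * greeneBinom (B * χ) (C * χ) * χ x

/-- Greene's finite field hypergeometric series ₃F₂. -/
noncomputable def greeneF32 (A B C D E : MulChar F ℂ) (x : F) : ℂ :=
  ((Fintype.card F : ℂ) / ((Fintype.card F : ℂ) - 1)) *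
    ∑ χ : MulChar F ℂ, greeneBinom (A * χ) χ * greeneBinom (B * χ) (D * χ) *
      greeneBinom (C * χ) (E * χ) * χ x

/-- Greene's finite field hypergeometric series ₄F₃. -/
noncomputable def greeneF43 (A₀ A₁ A₂ A₃ B₁ B₂ B₃ : MulChar F ℂ) (x : F) : ℂ :=
  ((Fintype.card F : ℂ) / ((Fintype.card F : ℂ) - 1)) *
    ∑ χ : MulChar F ℂ, greeneBinom (A₀ * χ) χ * greeneBinom (A₁ * χ) (B₁ * χ) *
      greeneBinom (A₂ * χ) (B₂ * χ) * greeneBinom (A₃ * χ) (B₃ * χ) * χ x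

set_option linter.unusedSectionVars false

lemma sum_mulChar' (χ : MulChar F ℂ) :
    ∑ x : F, χ x = if χ = 1 then ((Fintype.card F : ℂ) - 1) else 0 := by
  split_ifs with h
  · subst h
    rw [MulChar.sum_one_eq_card_units, Fintype.card_units]
    have : 1 ≤ Fintype.card F := Fintype.card_pos
    push_cast [this]
    ring
  · exact MulChar.sum_eq_zero_of_ne_one h

lemma sum_mulChar_sdiff (χ : MulChar F ℂ) :
    ∑ x ∈ (univ : Finset F) \ {0, 1}, χ x =
      (if χ = 1 then ((Fintype.card F : ℂ) - 1) else 0) - 1 := by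
  have h := Finset.sum_sdiff (s₁ := ({0, 1} : Finset F)) (s₂ := univ) (subset_univ _)
    (f := fun x => χ x)
  have h01 : ∑ x ∈ ({0, 1} : Finset F), χ x = 1 := by
    rw [Finset.sum_pair (zero_ne_one)]
    rw [MulChar.map_nonunit χ not_isUnit_zero, χ.map_one, zero_add]
  rw [← sum_mulChar' χ, ← h, h01]
  ring


lemma mulChar_ne_zero (χ : MulChar F ℂ) {u : F} (hu : u ≠ 0) : χ u ≠ 0 :=
  left_ne_zero_of_mul_eq_one (b := χ u⁻¹)
    (by rw [← map_mul, mul_inv_cancel₀ hu, map_one])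

lemma mulChar_mul_inv_self (χ : MulChar F ℂ) {u : F} (hu : u ≠ 0) : χ u * χ⁻¹ u = 1 := by
  rw [MulChar.inv_apply_eq_inv', mul_inv_cancel₀ (mulChar_ne_zero χ hu)]

lemma mem_sdiff01 {u : F} : u ∈ (univ : Finset F) \ {0, 1} ↔ u ≠ 0 ∧ u ≠ 1 := by
  simp [mem_sdiff]

lemma term_eq (A B C : MulChar F ℂ) {s t : F} (hs0 : s ≠ 0) (hs1 : s ≠ 1) (ht0 : t ≠ 0)
    (ht1 : t ≠ 1) (hst : s * t ≠ 1) :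
    B (-1) * (C s * B⁻¹ (1 - s)) * ((C * B⁻¹) t * (A * B⁻¹)⁻¹ (1 - t)) =
      A ((1 - s * t) / (1 - t)) * B⁻¹ (1 - (1 - s * t) / (1 - t)) *
        (C (s * t) * A⁻¹ (1 - s * t)) := by
  have h1t : (1 : F) - t ≠ 0 := sub_ne_zero.mpr (Ne.symm ht1)
  have h1s : (1 : F) - s ≠ 0 := sub_ne_zero.mpr (Ne.symm hs1)
  have h1st : (1 : F) - s * t ≠ 0 := sub_ne_zero.mpr (Ne.symm hst)
  simp only [MulChar.inv_apply', MulChar.mul_apply, inv_inv]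
  have h4 : t * (1 - s) ≠ 0 := mul_ne_zero ht0 h1s
  have harg : (1 - (1 - s * t) / (1 - t))⁻¹ = (-1) * (1 - s)⁻¹ * (t⁻¹ * (1 - t)) := by
    have e1 : 1 - (1 - s * t) / (1 - t) = -(t * (1 - s)) / (1 - t) := by
      field_simp
      ring
    rw [e1, neg_div, inv_neg, inv_div, div_eq_mul_inv, mul_inv]
    ring
  rw [harg]
  have hA : A ((1 - s * t) / (1 - t)) * A ((1 - s * t)⁻¹) = A ((1 - t)⁻¹) := by
    rw [← map_mul]
    congr 1
    field_simp
  have hB : B (-1) * B ((1 - s)⁻¹) * (B t⁻¹ * B (1 - t)) =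
      B ((-1) * (1 - s)⁻¹ * (t⁻¹ * (1 - t))) := by
    rw [← map_mul, ← map_mul, ← map_mul]
  calc B (-1) * (C s * B ((1 - s)⁻¹)) * (C t * B t⁻¹ * (A ((1 - t)⁻¹) * B (1 - t)))
      = (B (-1) * B ((1 - s)⁻¹) * (B t⁻¹ * B (1 - t))) * A ((1 - t)⁻¹) * (C s * C t) := by
        ring
    _ = B ((-1) * (1 - s)⁻¹ * (t⁻¹ * (1 - t))) * (A ((1 - s * t) / (1 - t)) *
          A ((1 - s * t)⁻¹)) * C (s * t) := by rw [hB, hA, map_mul C]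
    _ = _ := by ring

lemma key (A B C : MulChar F ℂ) :
    (∑ x : F, A x * B⁻¹ (1 - x)) * (∑ y : F, C y * A⁻¹ (1 - y)) =
      B (-1) * ((∑ x : F, C x * B⁻¹ (1 - x)) *
        (∑ x : F, (C * B⁻¹) x * (A * B⁻¹)⁻¹ (1 - x)))
      + ((Fintype.card F : ℂ) - 1) * (if B * C⁻¹ = 1 then 1 else 0)
      - ((Fintype.card F : ℂ) - 1) * (if A = 1 then 1 else 0) := by
  classical
  set f : F × F → ℂ := fun p => A p.1 * B⁻¹ (1 - p.1) * (C p.2 * A⁻¹ (1 - p.2)) with hf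
  set g : F × F → ℂ := fun p => B (-1) * (C p.1 * B⁻¹ (1 - p.1)) *
      ((C * B⁻¹) p.2 * (A * B⁻¹)⁻¹ (1 - p.2)) with hg
  set s1 : Finset (F × F) :=
    univ.filter (fun p => p.1 ≠ 0 ∧ p.1 ≠ 1 ∧ p.2 ≠ 0 ∧ p.2 ≠ 1) with hs1
  have hL : (∑ x : F, A x * B⁻¹ (1 - x)) * (∑ y : F, C y * A⁻¹ (1 - y)) =
      ∑ p ∈ s1, f p := by
    rw [Finset.sum_mul_sum, ← Finset.sum_product', Finset.univ_product_univ]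
    refine (Finset.sum_subset (Finset.filter_subset _ _) ?_).symm
    intro p _ hp
    simp only [hs1, mem_filter, mem_univ, true_and, not_and_or, not_ne_iff] at hp
    rcases hp with h | h | h | h
    · simp [hf, h, MulChar.map_nonunit A not_isUnit_zero]
    · simp [hf, h, MulChar.map_nonunit B⁻¹ not_isUnit_zero]
    · simp [hf, h, MulChar.map_nonunit C not_isUnit_zero]
    · simp [hf, h, MulChar.map_nonunit A⁻¹ not_isUnit_zero]
  have hR : B (-1) * ((∑ x : F, C x * B⁻¹ (1 - x)) *
        (∑ x : F, (C * B⁻¹) x * (A * B⁻¹)⁻¹ (1 - x))) = ∑ p ∈ s1, g p := by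
    rw [Finset.sum_mul_sum, ← Finset.sum_product', Finset.univ_product_univ, Finset.mul_sum]
    have step : ∀ p : F × F, B (-1) * (C p.1 * B⁻¹ (1 - p.1) *
        ((C * B⁻¹) p.2 * (A * B⁻¹)⁻¹ (1 - p.2))) = g p := fun p => by rw [hg]; ring
    rw [Finset.sum_congr rfl fun p _ => step p]
    refine (Finset.sum_subset (Finset.filter_subset _ _) ?_).symm
    intro p _ hp
    simp only [hs1, mem_filter, mem_univ, true_and, not_and_or, not_ne_iff] at hp
    rcases hp with h | h | h | h
    · simp [hg, h, MulChar.map_nonunit C not_isUnit_zero]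
    · simp [hg, h, MulChar.map_nonunit B⁻¹ not_isUnit_zero]
    · simp [hg, h, MulChar.map_nonunit (C * B⁻¹) not_isUnit_zero]
    · simp [hg, h, MulChar.map_nonunit (A * B⁻¹)⁻¹ not_isUnit_zero,
        MulChar.map_nonunit A⁻¹ not_isUnit_zero, MulChar.map_nonunit B not_isUnit_zero]
  -- slice of f along x + y = 1
  have hfslice : ∑ p ∈ s1.filter (fun p => p.1 + p.2 = 1), f p =
      ((Fintype.card F : ℂ) - 1) * (if B * C⁻¹ = 1 then 1 else 0) - 1 := by
    have e : ∑ p ∈ s1.filter (fun p => p.1 + p.2 = 1), f p =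
        ∑ y ∈ (univ : Finset F) \ {0, 1}, (C * B⁻¹) y := by
      refine Finset.sum_nbij' (fun p => p.2) (fun y => (1 - y, y)) ?_ ?_ ?_ ?_ ?_
      · intro p hp
        simp only [hs1, mem_filter, mem_univ, true_and] at hp
        exact mem_sdiff01.mpr ⟨hp.1.2.2.1, hp.1.2.2.2⟩
      · intro y hy
        obtain ⟨hy0, hy1⟩ := mem_sdiff01.mp hy
        simp only [hs1, mem_filter, mem_univ, true_and]
        refine ⟨⟨sub_ne_zero.mpr (Ne.symm hy1), ?_, hy0, hy1⟩, by ring⟩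
        intro h
        exact hy0 (sub_eq_self.mp h)
      · intro p hp
        simp only [hs1, mem_filter, mem_univ, true_and] at hp
        have h1 : 1 - p.2 = p.1 := by rw [← hp.2]; ring
        exact Prod.ext h1 rfl
      · intro y _; rfl
      · intro p hp
        simp only [hs1, mem_filter, mem_univ, true_and] at hp
        obtain ⟨⟨h10, h11, h20, h21⟩, hP⟩ := hp
        have hp1 : p.1 = 1 - p.2 := eq_sub_of_add_eq hP
        rw [hf]
        simp only
        rw [hp1, sub_sub_cancel, MulChar.mul_apply]
        have hcancel : A (1 - p.2) * A⁻¹ (1 - p.2) = 1 :=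
          mulChar_mul_inv_self A (by rw [← hp1]; exact h10)
        calc A (1 - p.2) * B⁻¹ p.2 * (C p.2 * A⁻¹ (1 - p.2))
            = A (1 - p.2) * A⁻¹ (1 - p.2) * (C p.2 * B⁻¹ p.2) := by ring
          _ = C p.2 * B⁻¹ p.2 := by rw [hcancel, one_mul]
    rw [e, sum_mulChar_sdiff]
    have hcond : (C * B⁻¹ = 1) ↔ (B * C⁻¹ = 1) := by
      rw [mul_inv_eq_one, mul_inv_eq_one, eq_comm]
    rw [if_congr hcond rfl rfl]
    split_ifs <;> ring
  -- slice of g along x * y = 1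
  have hgslice : ∑ p ∈ s1.filter (fun p => p.1 * p.2 = 1), g p =
      ((Fintype.card F : ℂ) - 1) * (if A = 1 then 1 else 0) - 1 := by
    have e : ∑ p ∈ s1.filter (fun p => p.1 * p.2 = 1), g p =
        ∑ u ∈ (univ : Finset F) \ {0, 1}, A u := by
      refine Finset.sum_nbij' (fun p => (1 - p.2)⁻¹) (fun u => ((1 - u⁻¹)⁻¹, 1 - u⁻¹))
        ?_ ?_ ?_ ?_ ?_
      · intro p hp
        simp only [hs1, mem_filter, mem_univ, true_and] at hp
        obtain ⟨⟨h10, h11, h20, h21⟩, hP⟩ := hp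
        have h1t : 1 - p.2 ≠ 0 := sub_ne_zero.mpr (Ne.symm h21)
        refine mem_sdiff01.mpr ⟨inv_ne_zero h1t, ?_⟩
        intro h
        rw [inv_eq_one] at h
        exact h20 (sub_eq_self.mp h)
      · intro u hu
        obtain ⟨hu0, hu1⟩ := mem_sdiff01.mp hu
        have hui : u⁻¹ ≠ 1 := fun h => hu1 (by rw [← inv_inv u, h, inv_one])
        have ht0 : 1 - u⁻¹ ≠ 0 := sub_ne_zero.mpr (Ne.symm hui)
        have ht1 : 1 - u⁻¹ ≠ 1 := fun h => (inv_ne_zero hu0) (sub_eq_self.mp h)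
        simp only [hs1, mem_filter, mem_univ, true_and]
        exact ⟨⟨inv_ne_zero ht0, fun h => ht1 (by rw [← inv_inv (1 - u⁻¹), h, inv_one]),
          ht0, ht1⟩, inv_mul_cancel₀ ht0⟩
      · intro p hp
        simp only [hs1, mem_filter, mem_univ, true_and] at hp
        obtain ⟨⟨h10, h11, h20, h21⟩, hP⟩ := hp
        have hp1 : p.1 = p.2⁻¹ := eq_inv_of_mul_eq_one_left hP
        show ((1 - ((1 - p.2)⁻¹)⁻¹)⁻¹, 1 - ((1 - p.2)⁻¹)⁻¹) = p
        rw [inv_inv, sub_sub_cancel, ← hp1]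
      · intro u hu
        obtain ⟨hu0, hu1⟩ := mem_sdiff01.mp hu
        show (1 - (1 - u⁻¹))⁻¹ = u
        rw [sub_sub_cancel, inv_inv]
      · intro p hp
        simp only [hs1, mem_filter, mem_univ, true_and] at hp
        obtain ⟨⟨h10, h11, h20, h21⟩, hP⟩ := hp
        have hp1 : p.1 = p.2⁻¹ := eq_inv_of_mul_eq_one_left hP
        have h1t : 1 - p.2 ≠ 0 := sub_ne_zero.mpr (Ne.symm h21)
        have hti : p.2⁻¹ ≠ 1 := fun h => h21 (by rw [← inv_inv p.2, h, inv_one])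
        have h1ti : 1 - p.2⁻¹ ≠ 0 := sub_ne_zero.mpr (Ne.symm hti)
        rw [hg]
        simp only
        rw [hp1]
        simp only [MulChar.inv_apply', MulChar.mul_apply, inv_inv]
        have e2 : (1 - p.2⁻¹)⁻¹ = -(p.2 * (1 - p.2)⁻¹) := by
          rw [show (1 : F) - p.2⁻¹ = -((1 - p.2) / p.2) by field_simp; ring,
            inv_neg, inv_div, div_eq_mul_inv]
        have hBarg : (-1 : F) * (1 - p.2⁻¹)⁻¹ * (p.2⁻¹ * (1 - p.2)) = 1 := by
          rw [e2]
          field_simp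
        have hCc : C p.2⁻¹ * C p.2 = 1 := by
          rw [← map_mul, inv_mul_cancel₀ h20, map_one]
        calc B (-1) * (C p.2⁻¹ * B ((1 - p.2⁻¹)⁻¹)) *
              (C p.2 * B p.2⁻¹ * (A ((1 - p.2)⁻¹) * B (1 - p.2)))
            = (B (-1) * B ((1 - p.2⁻¹)⁻¹) * (B p.2⁻¹ * B (1 - p.2))) *
              (C p.2⁻¹ * C p.2) * A ((1 - p.2)⁻¹) := by ring
          _ = B ((-1) * (1 - p.2⁻¹)⁻¹ * (p.2⁻¹ * (1 - p.2))) * (C p.2⁻¹ * C p.2) *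
              A ((1 - p.2)⁻¹) := by rw [← map_mul, ← map_mul, ← map_mul]
          _ = A ((1 - p.2)⁻¹) := by rw [hBarg, hCc, map_one, one_mul, one_mul]
    rw [e, sum_mulChar_sdiff]
    split_ifs <;> ring
  -- main bijection
  have hmain : ∑ p ∈ s1.filter (fun p => ¬ p.1 * p.2 = 1), g p =
      ∑ p ∈ s1.filter (fun p => ¬ p.1 + p.2 = 1), f p := by
    refine Finset.sum_nbij' (fun p => ((1 - p.1 * p.2) / (1 - p.2), p.1 * p.2))
      (fun q => (q.1 * q.2 / (q.1 + q.2 - 1), (q.1 + q.2 - 1) / q.1)) ?_ ?_ ?_ ?_ ?_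
    · intro p hp
      simp only [hs1, mem_filter, mem_univ, true_and] at hp ⊢
      obtain ⟨⟨h10, h11, h20, h21⟩, hP⟩ := hp
      have h1t : 1 - p.2 ≠ 0 := sub_ne_zero.mpr (Ne.symm h21)
      have h1st : 1 - p.1 * p.2 ≠ 0 := sub_ne_zero.mpr (Ne.symm hP)
      refine ⟨⟨div_ne_zero h1st h1t, ?_, mul_ne_zero h10 h20, hP⟩, ?_⟩
      · intro h
        rw [div_eq_one_iff_eq h1t] at h
        have h' : p.1 * p.2 = 1 * p.2 := by rw [one_mul]; exact sub_right_inj.mp h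
        exact h11 (mul_right_cancel₀ h20 h')
      · intro h
        have h2 : (1 - p.1 * p.2) / (1 - p.2) = (1 - p.1 * p.2) * 1 := by
          rw [mul_one]; exact eq_sub_of_add_eq h
        rw [div_eq_iff h1t] at h2
        have h3 : (1 : F) - p.2 = 1 := mul_left_cancel₀ h1st
          (by linear_combination -h2 : (1 - p.1 * p.2) * (1 - p.2) = (1 - p.1 * p.2) * 1)
        exact h20 (sub_eq_self.mp h3)
    · intro q hq
      simp only [hs1, mem_filter, mem_univ, true_and] at hq ⊢
      obtain ⟨⟨h10, h11, h20, h21⟩, hP⟩ := hq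
      have hd : q.1 + q.2 - 1 ≠ 0 := fun h => hP (by rw [← sub_eq_zero]; exact h)
      have h1y : 1 - q.2 ≠ 0 := sub_ne_zero.mpr (Ne.symm h21)
      have h1x : 1 - q.1 ≠ 0 := sub_ne_zero.mpr (Ne.symm h11)
      have hprod : q.1 * q.2 / (q.1 + q.2 - 1) * ((q.1 + q.2 - 1) / q.1) = q.2 := by
        field_simp
      refine ⟨⟨div_ne_zero (mul_ne_zero h10 h20) hd, ?_, div_ne_zero hd h10, ?_⟩, ?_⟩
      · intro h
        rw [div_eq_one_iff_eq hd] at h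
        have : (1 - q.1) * (1 - q.2) = 0 := by linear_combination h
        rcases mul_eq_zero.mp this with h' | h'
        · exact h1x h'
        · exact h1y h'
      · intro h
        rw [div_eq_one_iff_eq h10] at h
        exact h21 (by linear_combination h)
      · intro h
        rw [hprod] at h
        exact h21 h
    · intro p hp
      simp only [hs1, mem_filter, mem_univ, true_and] at hp
      obtain ⟨⟨h10, h11, h20, h21⟩, hP⟩ := hp
      have h1t : 1 - p.2 ≠ 0 := sub_ne_zero.mpr (Ne.symm h21)
      have h1st : 1 - p.1 * p.2 ≠ 0 := sub_ne_zero.mpr (Ne.symm hP)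
      have hd : (1 - p.1 * p.2) / (1 - p.2) + p.1 * p.2 - 1 =
          (1 - p.1 * p.2) * p.2 / (1 - p.2) := by
        field_simp
        ring
      have hdne : (1 - p.1 * p.2) * p.2 / (1 - p.2) ≠ 0 :=
        div_ne_zero (mul_ne_zero h1st h20) h1t
      have hc1 : (1 - p.1 * p.2) / (1 - p.2) * (p.1 * p.2) /
          ((1 - p.1 * p.2) / (1 - p.2) + p.1 * p.2 - 1) = p.1 := by
        rw [hd, div_eq_iff hdne]
        field_simp
      have hc2 : ((1 - p.1 * p.2) / (1 - p.2) + p.1 * p.2 - 1) /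
          ((1 - p.1 * p.2) / (1 - p.2)) = p.2 := by
        rw [hd, div_eq_iff (div_ne_zero h1st h1t)]
        field_simp
      exact Prod.ext hc1 hc2
    · intro q hq
      simp only [hs1, mem_filter, mem_univ, true_and] at hq
      obtain ⟨⟨h10, h11, h20, h21⟩, hP⟩ := hq
      have hd : q.1 + q.2 - 1 ≠ 0 := fun h => hP (by rw [← sub_eq_zero]; exact h)
      have h1y : 1 - q.2 ≠ 0 := sub_ne_zero.mpr (Ne.symm h21)
      have hprod : q.1 * q.2 / (q.1 + q.2 - 1) * ((q.1 + q.2 - 1) / q.1) = q.2 := by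
        field_simp
      have hc1 : (1 - q.1 * q.2 / (q.1 + q.2 - 1) * ((q.1 + q.2 - 1) / q.1)) /
          (1 - (q.1 + q.2 - 1) / q.1) = q.1 := by
        rw [hprod, show 1 - (q.1 + q.2 - 1) / q.1 = (1 - q.2) / q.1 from by
          field_simp; ring, div_div_eq_mul_div, mul_comm, mul_div_assoc,
          div_self h1y, mul_one]
      exact Prod.ext hc1 hprod
    · intro p hp
      simp only [hs1, mem_filter, mem_univ, true_and] at hp
      obtain ⟨⟨h10, h11, h20, h21⟩, hP⟩ := hp
      rw [hg, hf]
      simp only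
      exact term_eq A B C h10 h11 h20 h21 hP
  rw [hL, hR, ← Finset.sum_filter_add_sum_filter_not s1 (fun p => p.1 + p.2 = 1) f,
    ← Finset.sum_filter_add_sum_filter_not s1 (fun p => p.1 * p.2 = 1) g,
    hfslice, hgslice, hmain]
  ring

/-- `(A choose B)(C choose A) = (C choose B)(CB̄ choose AB̄)
  - ((q-1)/q²)·B(-1)·δ(A) + ((q-1)/q²)·AB(-1)·δ(BC̄)`. -/
theorem greeneBinom_mul_greeneBinom (A B C : MulChar F ℂ) :
    greeneBinom A B * greeneBinom C A =
      greeneBinom C B * greeneBinom (C * B⁻¹) (A * B⁻¹) -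
        ((Fintype.card F : ℂ) - 1) / (Fintype.card F : ℂ) ^ 2 * B (-1) *
          (if A = 1 then 1 else 0) +
        ((Fintype.card F : ℂ) - 1) / (Fintype.card F : ℂ) ^ 2 * (A * B) (-1) *
          (if B * C⁻¹ = 1 then 1 else 0) := by
  have hq : (Fintype.card F : ℂ) ≠ 0 := Nat.cast_ne_zero.mpr Fintype.card_ne_zero
  have hk := key A B C
  have hBB : B (-1) * B (-1) = 1 := by
    rw [← map_mul, neg_mul_neg, one_mul, map_one]
  have hAinv : (A * B⁻¹) (-1) = A (-1) * B (-1) := by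
    rw [MulChar.mul_apply, MulChar.inv_apply', inv_neg, inv_one]
  have hAB : (A * B) (-1) = A (-1) * B (-1) := MulChar.mul_apply A B (-1)
  have hAd : A (-1) * (if A = 1 then (1 : ℂ) else 0) = (if A = 1 then 1 else 0) := by
    split_ifs with h
    · rw [h, mul_one, MulChar.one_apply (isUnit_one.neg)]
    · rw [mul_zero]
  simp only [greeneBinom, hAinv, hAB]
  linear_combination (A (-1) * B (-1) / (Fintype.card F : ℂ) ^ 2) * hk -
    ((Fintype.card F : ℂ) - 1) / (Fintype.card F : ℂ) ^ 2 * B (-1) * hAd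
end

section
/- Let A, B, C be multiplicative characters on F_q and define McCarthy's ₂F₁*(A,B;C|x) = (1/(q-1))·Σ_χ [g(Aχ)/g(A)]·[g(Bχ)/g(B)]·[g(C̄χ̄)/g(C̄)]·g(χ̄)·χ(-1)²·χ(x) (with χ(-1)^{n+1} for n=1). Then ₂F₁*(A,B;C|1) = g(A·C̄)·g(B·C̄)/(g(C̄)·g(A·B·C̄)) + q(q-1)·AB(-1)·δ(A·B·C̄)/(g(A)g(B)g(C̄)). -/
open Finset

variable {F : Type*} [Field F] [Fintype F] [DecidableEq F]

lemma my_card_mulChar : Fintype.card (MulChar F ℂ) = Fintype.card F - 1 := by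
  rw [← Nat.card_eq_fintype_card, MulChar.card_eq_card_units_of_hasEnoughRootsOfUnity F ℂ,
    Nat.card_eq_fintype_card, Fintype.card_units]

lemma my_sum_mulChar (a : F) :
    ∑ χ : MulChar F ℂ, χ a = if a = 1 then ((Fintype.card F : ℂ) - 1) else 0 := by
  split_ifs with h
  · subst h
    simp only [map_one]
    rw [Finset.sum_const, card_univ, my_card_mulChar, nsmul_eq_mul, mul_one,
      Nat.cast_sub Fintype.card_pos, Nat.cast_one]
  · obtain ⟨χ₀, hχ₀⟩ := MulChar.exists_apply_ne_one_of_hasEnoughRootsOfUnity F ℂ h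
    refine eq_zero_of_mul_eq_self_left hχ₀ ?_
    simp only [Finset.mul_sum, ← MulChar.mul_apply]
    exact Fintype.sum_bijective _ (Group.mulLeft_bijective χ₀) _ _ fun χ' ↦ rfl

variable {ψ : AddChar F ℂ}

lemma my_gaussSum_one (hψ : ψ ≠ 1) : gaussSum (1 : MulChar F ℂ) ψ = -1 := by
  have h0 : ∑ a : F, ψ a = 0 := AddChar.sum_eq_zero_iff_ne_zero.mpr hψ
  rw [gaussSum, Finset.sum_eq_sum_sdiff_singleton_add (mem_univ (0 : F)),
    MulChar.map_zero, zero_mul, add_zero]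
  have h1 : ∑ a ∈ univ \ {(0 : F)}, (1 : MulChar F ℂ) a * ψ a = ∑ a ∈ univ \ {(0 : F)}, ψ a := by
    refine Finset.sum_congr rfl fun a ha ↦ ?_
    simp only [mem_sdiff, mem_univ, mem_singleton, true_and] at ha
    rw [MulChar.one_apply (isUnit_iff_ne_zero.mpr ha), one_mul]
  rw [h1]
  have h2 := Finset.sum_eq_sum_sdiff_singleton_add (mem_univ (0 : F)) (fun a ↦ ψ a)
  simp only [h0, AddChar.map_zero_eq_one] at h2
  linear_combination -h2

lemma my_sq_one (X : MulChar F ℂ) : X (-1) * X (-1) = 1 := by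
  rw [← map_mul]; norm_num

lemma my_gauss_mul_gauss_inv (hψ : ψ ≠ 1) {X : MulChar F ℂ} (hX : X ≠ 1) :
    gaussSum X ψ * gaussSum X⁻¹ ψ = X (-1) * (Fintype.card F : ℂ) := by
  have hprim := AddChar.IsPrimitive.of_ne_one hψ
  have h1 : gaussSum X ψ * gaussSum X⁻¹ ψ⁻¹ = Fintype.card F :=
    gaussSum_mul_gaussSum_eq_card hX hprim
  have h2 : X⁻¹ (-1) * gaussSum X⁻¹ ψ⁻¹ = gaussSum X⁻¹ ψ := mul_gaussSum_inv_eq_gaussSum X⁻¹ ψ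
  have h3 : X⁻¹ (-1) = X (-1) := by
    rw [MulChar.inv_apply_eq_inv']
    exact inv_eq_of_mul_eq_one_left (my_sq_one X)
  rw [← h2, h3]
  linear_combination X (-1) * h1

lemma my_gauss_ne_zero (hψ : ψ ≠ 1) (X : MulChar F ℂ) : gaussSum X ψ ≠ 0 := by
  by_cases hX : X = 1
  · rw [hX, my_gaussSum_one hψ]; norm_num
  · exact gaussSum_ne_zero_of_nontrivial (Nat.cast_ne_zero.mpr Fintype.card_ne_zero) hX
      (AddChar.IsPrimitive.of_ne_one hψ)

lemma my_pair (hψ : ψ ≠ 1) (X Y : MulChar F ℂ) :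
    gaussSum X ψ * gaussSum Y ψ = jacobiSum X Y * gaussSum (X * Y) ψ +
      (if X * Y = 1 then ((Fintype.card F : ℂ) - 1) * X (-1) else 0) := by
  by_cases h : X * Y = 1
  · rw [if_pos h]
    have hY : Y = X⁻¹ := eq_inv_of_mul_eq_one_left (by rwa [mul_comm])
    subst hY
    rw [h, my_gaussSum_one hψ]
    by_cases hX : X = 1
    · subst hX
      rw [inv_one, my_gaussSum_one hψ, jacobiSum_one_one]
      rw [MulChar.one_apply isUnit_one.neg]
      ring
    · rw [my_gauss_mul_gauss_inv hψ hX, jacobiSum_nontrivial_inv hX]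
      ring
  · rw [if_neg h, add_zero, ← jacobiSum_mul_nontrivial h ψ]
    ring

lemma my_sum_jacobi (A B C : MulChar F ℂ) :
    ∑ χ : MulChar F ℂ, jacobiSum (A * χ) χ⁻¹ * jacobiSum (B * χ) (C⁻¹ * χ⁻¹) =
      ((Fintype.card F : ℂ) - 1) * jacobiSum (A * C⁻¹) B := by
  have key : ∀ χ : MulChar F ℂ, jacobiSum (A * χ) χ⁻¹ * jacobiSum (B * χ) (C⁻¹ * χ⁻¹) =
      ∑ x : F, ∑ y : F,
        A x * B y * C⁻¹ (1 - y) * χ (x * (1 - x)⁻¹ * (y * (1 - y)⁻¹)) := by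
    intro χ
    rw [jacobiSum, jacobiSum, Finset.sum_mul_sum]
    refine Finset.sum_congr rfl fun x _ ↦ Finset.sum_congr rfl fun y _ ↦ ?_
    simp only [MulChar.mul_apply, MulChar.inv_apply', map_mul]
    ring
  calc ∑ χ : MulChar F ℂ, jacobiSum (A * χ) χ⁻¹ * jacobiSum (B * χ) (C⁻¹ * χ⁻¹)
      = ∑ x : F, ∑ y : F, A x * B y * C⁻¹ (1 - y) *
          (if x * (1 - x)⁻¹ * (y * (1 - y)⁻¹) = 1 then ((Fintype.card F : ℂ) - 1) else 0) := by
        rw [Finset.sum_congr rfl fun χ _ ↦ key χ, Finset.sum_comm]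
        refine Finset.sum_congr rfl fun x _ ↦ ?_
        rw [Finset.sum_comm]
        refine Finset.sum_congr rfl fun y _ ↦ ?_
        rw [← Finset.mul_sum, my_sum_mulChar]
    _ = ∑ x : F, ((Fintype.card F : ℂ) - 1) * ((A * C⁻¹) x * B (1 - x)) := by
        refine Finset.sum_congr rfl fun x _ ↦ ?_
        by_cases hx0 : x = 0
        · subst hx0
          simp [MulChar.map_zero]
        by_cases hx1 : x = 1
        · subst hx1
          simp [MulChar.map_zero]
        rw [Finset.sum_eq_single (1 - x)]
        · have h1x : (1 : F) - x ≠ 0 := sub_ne_zero.mpr (Ne.symm hx1)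
          rw [sub_sub_cancel, if_pos (by field_simp), MulChar.mul_apply]
          ring
        · intro y _ hy
          by_cases hy1 : y = 1
          · subst hy1
            rw [sub_self, inv_zero, mul_zero, mul_zero, if_neg, mul_zero]
            exact fun h ↦ one_ne_zero (h.symm)
          by_cases hy0 : y = 0
          · subst hy0
            simp [MulChar.map_zero]
          · rw [if_neg, mul_zero]
            intro h
            apply hy
            have h1x : (1 : F) - x ≠ 0 := sub_ne_zero.mpr (Ne.symm hx1)
            have h1y : (1 : F) - y ≠ 0 := sub_ne_zero.mpr (Ne.symm hy1)
            field_simp at h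
            linear_combination h
        · intro h
          exact absurd (mem_univ _) h
    _ = ((Fintype.card F : ℂ) - 1) * jacobiSum (A * C⁻¹) B := by
        rw [jacobiSum, Finset.mul_sum]

lemma my_sum_jacobi_sign (D E : MulChar F ℂ) :
    ∑ χ : MulChar F ℂ, χ (-1) * jacobiSum (D * χ) (E * χ⁻¹) = 0 := by
  have key : ∀ χ : MulChar F ℂ, χ (-1) * jacobiSum (D * χ) (E * χ⁻¹) =
      ∑ x : F, D x * E (1 - x) * χ (-(x * (1 - x)⁻¹)) := by
    intro χ
    rw [jacobiSum, Finset.mul_sum]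
    refine Finset.sum_congr rfl fun x _ ↦ ?_
    rw [MulChar.mul_apply, MulChar.mul_apply, MulChar.inv_apply']
    rw [show -(x * (1 - x)⁻¹) = (-1) * (x * ((1-x)⁻¹)) by ring, map_mul, map_mul]
    ring
  rw [Finset.sum_congr rfl fun χ _ ↦ key χ, Finset.sum_comm]
  refine Finset.sum_eq_zero fun x _ ↦ ?_
  rw [← Finset.mul_sum, my_sum_mulChar, if_neg, mul_zero]
  intro h
  by_cases hx1 : x = 1
  · subst hx1
    rw [sub_self, inv_zero, mul_zero, neg_zero] at h
    exact zero_ne_one h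
  · have h1x : (1 : F) - x ≠ 0 := sub_ne_zero.mpr (Ne.symm hx1)
    field_simp at h
    exact one_ne_zero (by linear_combination -h : (1 : F) = 0)

lemma my_sum_sign (A B : MulChar F ℂ) :
    ∑ χ : MulChar F ℂ, (A * χ) (-1) * (B * χ) (-1) =
      ((Fintype.card F : ℂ) - 1) * (A (-1) * B (-1)) := by
  have key : ∀ χ : MulChar F ℂ, (A * χ) (-1) * (B * χ) (-1) = A (-1) * B (-1) := by
    intro χ
    rw [MulChar.mul_apply, MulChar.mul_apply]
    linear_combination A (-1) * B (-1) * my_sq_one χ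
  rw [Finset.sum_congr rfl fun χ _ ↦ key χ, Finset.sum_const, card_univ, my_card_mulChar,
    nsmul_eq_mul, Nat.cast_sub Fintype.card_pos, Nat.cast_one]


set_option maxHeartbeats 2000000 in
/-- McCarthy's `₂F₁*` evaluated at `x = 1`:
`₂F₁*(A,B;C|1) = g(AC̄)g(BC̄)/(g(C̄)g(ABC̄)) + q(q-1)·AB(-1)·δ(ABC̄)/(g(A)g(B)g(C̄))`. -/
theorem mcCarthyF21_at_one (hq : Odd (Fintype.card F)) (ψ : AddChar F ℂ) (hψ : ψ ≠ 1)
    (A B C : MulChar F ℂ) :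
    (1 / ((Fintype.card F : ℂ) - 1)) *
        ∑ χ : MulChar F ℂ, (gaussSum (A * χ) ψ / gaussSum A ψ) *
          (gaussSum (B * χ) ψ / gaussSum B ψ) *
          (gaussSum (C⁻¹ * χ⁻¹) ψ / gaussSum C⁻¹ ψ) *
          gaussSum χ⁻¹ ψ * (χ (-1)) ^ 2 * χ (1 : F) =
      gaussSum (A * C⁻¹) ψ * gaussSum (B * C⁻¹) ψ /
          (gaussSum C⁻¹ ψ * gaussSum (A * B * C⁻¹) ψ) +
        (Fintype.card F : ℂ) * ((Fintype.card F : ℂ) - 1) * (A * B) (-1) *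
          (if A * B * C⁻¹ = 1 then 1 else 0) /
          (gaussSum A ψ * gaussSum B ψ * gaussSum C⁻¹ ψ) := by
  classical
  have hprim := AddChar.IsPrimitive.of_ne_one hψ
  have hq0 : (Fintype.card F : ℂ) ≠ 0 := Nat.cast_ne_zero.mpr Fintype.card_ne_zero
  have hq1 : (Fintype.card F : ℂ) - 1 ≠ 0 := by
    have h1 : (Fintype.card F : ℂ) ≠ 1 := by
      exact_mod_cast (Fintype.one_lt_card (α := F)).ne'
    exact sub_ne_zero.mpr h1
  have gne : ∀ X : MulChar F ℂ, gaussSum X ψ ≠ 0 := my_gauss_ne_zero hψ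
  have e2 : ∀ χ : MulChar F ℂ, B * χ * (C⁻¹ * χ⁻¹) = B * C⁻¹ := fun χ ↦ by
    rw [mul_mul_mul_comm, mul_inv_cancel, mul_one]
  have hterm : ∀ χ : MulChar F ℂ,
      (gaussSum (A * χ) ψ / gaussSum A ψ) * (gaussSum (B * χ) ψ / gaussSum B ψ) *
        (gaussSum (C⁻¹ * χ⁻¹) ψ / gaussSum C⁻¹ ψ) * gaussSum χ⁻¹ ψ * (χ (-1)) ^ 2 * χ (1 : F) =
      (gaussSum (A * χ) ψ * gaussSum χ⁻¹ ψ) * (gaussSum (B * χ) ψ * gaussSum (C⁻¹ * χ⁻¹) ψ) /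
        (gaussSum A ψ * gaussSum B ψ * gaussSum C⁻¹ ψ) := fun χ ↦ by
    have h2 : (χ (-1)) ^ 2 = 1 := by rw [sq]; exact my_sq_one χ
    rw [map_one, h2, mul_one, mul_one]
    field_simp
  rw [Finset.sum_congr rfl fun χ _ ↦ hterm χ, ← Finset.sum_div]
  have hpair1 : ∀ χ : MulChar F ℂ, gaussSum (A * χ) ψ * gaussSum χ⁻¹ ψ =
      jacobiSum (A * χ) χ⁻¹ * gaussSum A ψ +
        (if A = 1 then ((Fintype.card F : ℂ) - 1) * ((A * χ) (-1)) else 0) := fun χ ↦ by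
    have h := my_pair hψ (A * χ) χ⁻¹
    rwa [mul_inv_cancel_right] at h
  have hpair2 : ∀ χ : MulChar F ℂ, gaussSum (B * χ) ψ * gaussSum (C⁻¹ * χ⁻¹) ψ =
      jacobiSum (B * χ) (C⁻¹ * χ⁻¹) * gaussSum (B * C⁻¹) ψ +
        (if B * C⁻¹ = 1 then ((Fintype.card F : ℂ) - 1) * ((B * χ) (-1)) else 0) := fun χ ↦ by
    have h := my_pair hψ (B * χ) (C⁻¹ * χ⁻¹)
    rwa [e2 χ] at h
  have hsign1 : ∑ χ : MulChar F ℂ, χ (-1) * jacobiSum (A * χ) χ⁻¹ = 0 := by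
    simpa only [one_mul] using my_sum_jacobi_sign A (1 : MulChar F ℂ)
  have hsign2 : ∑ χ : MulChar F ℂ, χ (-1) * jacobiSum (B * χ) (C⁻¹ * χ⁻¹) = 0 :=
    my_sum_jacobi_sign B C⁻¹
  have hS : ∑ χ : MulChar F ℂ,
      (gaussSum (A * χ) ψ * gaussSum χ⁻¹ ψ) * (gaussSum (B * χ) ψ * gaussSum (C⁻¹ * χ⁻¹) ψ) =
      ((Fintype.card F : ℂ) - 1) * jacobiSum (A * C⁻¹) B *
        (gaussSum A ψ * gaussSum (B * C⁻¹) ψ) +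
      (if A = 1 ∧ B * C⁻¹ = 1 then ((Fintype.card F : ℂ) - 1) ^ 3 * (A (-1) * B (-1)) else 0) := by
    have split : ∀ χ : MulChar F ℂ,
        (gaussSum (A * χ) ψ * gaussSum χ⁻¹ ψ) * (gaussSum (B * χ) ψ * gaussSum (C⁻¹ * χ⁻¹) ψ) =
        jacobiSum (A * χ) χ⁻¹ * jacobiSum (B * χ) (C⁻¹ * χ⁻¹) *
          (gaussSum A ψ * gaussSum (B * C⁻¹) ψ) +
        ((jacobiSum (A * χ) χ⁻¹ * gaussSum A ψ) *
            (if B * C⁻¹ = 1 then ((Fintype.card F : ℂ) - 1) * ((B * χ) (-1)) else 0) +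
          ((if A = 1 then ((Fintype.card F : ℂ) - 1) * ((A * χ) (-1)) else 0) *
              (jacobiSum (B * χ) (C⁻¹ * χ⁻¹) * gaussSum (B * C⁻¹) ψ) +
            (if A = 1 then ((Fintype.card F : ℂ) - 1) * ((A * χ) (-1)) else 0) *
              (if B * C⁻¹ = 1 then ((Fintype.card F : ℂ) - 1) * ((B * χ) (-1)) else 0))) := by
      intro χ
      rw [hpair1 χ, hpair2 χ]
      ring
    rw [Finset.sum_congr rfl fun χ _ ↦ split χ, Finset.sum_add_distrib, Finset.sum_add_distrib,
      Finset.sum_add_distrib]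
    have p1 : ∑ χ : MulChar F ℂ, jacobiSum (A * χ) χ⁻¹ * jacobiSum (B * χ) (C⁻¹ * χ⁻¹) *
        (gaussSum A ψ * gaussSum (B * C⁻¹) ψ) =
        ((Fintype.card F : ℂ) - 1) * jacobiSum (A * C⁻¹) B *
          (gaussSum A ψ * gaussSum (B * C⁻¹) ψ) := by
      rw [← Finset.sum_mul, my_sum_jacobi]
    have p2 : ∑ χ : MulChar F ℂ, (jacobiSum (A * χ) χ⁻¹ * gaussSum A ψ) *
        (if B * C⁻¹ = 1 then ((Fintype.card F : ℂ) - 1) * ((B * χ) (-1)) else 0) = 0 := by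
      by_cases hbc : B * C⁻¹ = 1
      · simp only [if_pos hbc]
        calc ∑ χ : MulChar F ℂ, (jacobiSum (A * χ) χ⁻¹ * gaussSum A ψ) *
              (((Fintype.card F : ℂ) - 1) * ((B * χ) (-1)))
            = (gaussSum A ψ * (((Fintype.card F : ℂ) - 1) * B (-1))) *
              ∑ χ : MulChar F ℂ, χ (-1) * jacobiSum (A * χ) χ⁻¹ := by
              rw [Finset.mul_sum]
              refine Finset.sum_congr rfl fun χ _ ↦ ?_
              rw [MulChar.mul_apply]
              ring
          _ = 0 := by rw [hsign1, mul_zero]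
      · simp only [if_neg hbc, mul_zero, Finset.sum_const_zero]
    have p3 : ∑ χ : MulChar F ℂ,
        (if A = 1 then ((Fintype.card F : ℂ) - 1) * ((A * χ) (-1)) else 0) *
          (jacobiSum (B * χ) (C⁻¹ * χ⁻¹) * gaussSum (B * C⁻¹) ψ) = 0 := by
      by_cases hA : A = 1
      · simp only [if_pos hA]
        calc ∑ χ : MulChar F ℂ, (((Fintype.card F : ℂ) - 1) * ((A * χ) (-1))) *
              (jacobiSum (B * χ) (C⁻¹ * χ⁻¹) * gaussSum (B * C⁻¹) ψ)
            = (gaussSum (B * C⁻¹) ψ * (((Fintype.card F : ℂ) - 1) * A (-1))) *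
              ∑ χ : MulChar F ℂ, χ (-1) * jacobiSum (B * χ) (C⁻¹ * χ⁻¹) := by
              rw [Finset.mul_sum]
              refine Finset.sum_congr rfl fun χ _ ↦ ?_
              rw [MulChar.mul_apply]
              ring
          _ = 0 := by rw [hsign2, mul_zero]
      · simp only [if_neg hA, zero_mul, Finset.sum_const_zero]
    have p4 : ∑ χ : MulChar F ℂ,
        (if A = 1 then ((Fintype.card F : ℂ) - 1) * ((A * χ) (-1)) else 0) *
          (if B * C⁻¹ = 1 then ((Fintype.card F : ℂ) - 1) * ((B * χ) (-1)) else 0) =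
        (if A = 1 ∧ B * C⁻¹ = 1 then ((Fintype.card F : ℂ) - 1) ^ 3 * (A (-1) * B (-1))
          else 0) := by
      by_cases hA : A = 1
      · by_cases hbc : B * C⁻¹ = 1
        · simp only [if_pos hA, if_pos hbc, if_pos (⟨hA, hbc⟩ : A = 1 ∧ B * C⁻¹ = 1)]
          calc ∑ χ : MulChar F ℂ, (((Fintype.card F : ℂ) - 1) * ((A * χ) (-1))) *
                (((Fintype.card F : ℂ) - 1) * ((B * χ) (-1)))
              = (((Fintype.card F : ℂ) - 1) * ((Fintype.card F : ℂ) - 1)) *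
                ∑ χ : MulChar F ℂ, (A * χ) (-1) * (B * χ) (-1) := by
                rw [Finset.mul_sum]
                exact Finset.sum_congr rfl fun χ _ ↦ by ring
            _ = _ := by rw [my_sum_sign]; ring
        · simp only [if_neg hbc, mul_zero, Finset.sum_const_zero,
            if_neg (fun h ↦ hbc h.2 : ¬(A = 1 ∧ B * C⁻¹ = 1))]
      · simp only [if_neg hA, zero_mul, Finset.sum_const_zero,
          if_neg (fun h ↦ hA h.1 : ¬(A = 1 ∧ B * C⁻¹ = 1))]
    rw [p1, p2, p3, p4, zero_add, zero_add]
  rw [hS]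
  have hab : (A * B) (-1) = A (-1) * B (-1) := MulChar.mul_apply A B (-1)
  by_cases habc : A * B * C⁻¹ = 1
  · rw [if_pos habc, mul_one]
    have hBinv : A * C⁻¹ = B⁻¹ :=
      eq_inv_of_mul_eq_one_left (by rw [mul_right_comm] at habc; exact habc)
    have hAinv : B * C⁻¹ = A⁻¹ :=
      eq_inv_of_mul_eq_one_left (by rw [mul_rotate] at habc; exact habc)
    have hgABC : gaussSum (A * B * C⁻¹) ψ = -1 := by rw [habc]; exact my_gaussSum_one hψ
    rw [hBinv, hgABC, hab]
    simp only [hAinv, inv_eq_one, and_self]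
    have hq1' : (1 : ℂ) - (Fintype.card F : ℂ) ≠ 0 := fun h ↦ hq1 (by linear_combination -h)
    by_cases hB : B = 1
    · subst hB
      have hC : C⁻¹ = A⁻¹ := by rw [← hAinv, one_mul]
      simp only [inv_one, jacobiSum_one_one, my_gaussSum_one hψ, hC,
        MulChar.one_apply isUnit_one.neg, mul_one]
      by_cases hA : A = 1
      · rw [if_pos hA, hA]
        simp only [inv_one, my_gaussSum_one hψ, MulChar.one_apply isUnit_one.neg]
        field_simp
        ring
      · rw [if_neg hA]
        have hAA := my_gauss_mul_gauss_inv hψ hA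
        have ha2 := my_sq_one A
        have hgA := gne A
        have hgAi := gne A⁻¹
        set q : ℂ := (Fintype.card F : ℂ) with hqdef
        set gA := gaussSum A ψ with hgAdef
        set gAi := gaussSum A⁻¹ ψ with hgAidef
        set a := A (-1) with hadef
        have ha0 : a ≠ 0 := left_ne_zero_of_mul_eq_one ha2
        have hsub : gAi = a * q / gA := by rw [eq_div_iff hgA]; linear_combination hAA
        rw [hsub]
        field_simp
        ring
    · have hJB : jacobiSum B⁻¹ B = -(B (-1)) := by
        have h := jacobiSum_nontrivial_inv (inv_ne_one.mpr hB)
        rw [inv_inv] at h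
        rw [h, MulChar.inv_apply_eq_inv', inv_eq_of_mul_eq_one_left (my_sq_one B)]
      rw [hJB]
      have hBB := my_gauss_mul_gauss_inv hψ hB
      have hb2 := my_sq_one B
      have hgB := gne B
      have hgBi := gne B⁻¹
      by_cases hA : A = 1
      · rw [if_pos hA]
        have hC : C⁻¹ = B⁻¹ :=
          eq_inv_of_mul_eq_one_right (hAinv.trans (by rw [hA, inv_one]))
        simp only [hA, hC, inv_one, my_gaussSum_one hψ, MulChar.one_apply isUnit_one.neg, one_mul]
        set q : ℂ := (Fintype.card F : ℂ) with hqdef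
        set gB := gaussSum B ψ with hgBdef
        set gBi := gaussSum B⁻¹ ψ with hgBidef
        set b := B (-1) with hbdef
        have hb0 : b ≠ 0 := left_ne_zero_of_mul_eq_one hb2
        have hsub : gBi = b * q / gB := by rw [eq_div_iff hgB]; linear_combination hBB
        rw [hsub]
        field_simp
        ring
      · rw [if_neg hA]
        have hAA := my_gauss_mul_gauss_inv hψ hA
        have ha2 := my_sq_one A
        have hgA := gne A
        have hgAi := gne A⁻¹
        have hgC := gne C⁻¹
        set q : ℂ := (Fintype.card F : ℂ) with hqdef
        set gA := gaussSum A ψ with hgAdef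
        set gAi := gaussSum A⁻¹ ψ with hgAidef
        set gB := gaussSum B ψ with hgBdef
        set gBi := gaussSum B⁻¹ ψ with hgBidef
        set gC := gaussSum C⁻¹ ψ with hgCdef
        set a := A (-1) with hadef
        set b := B (-1) with hbdef
        have ha0 : a ≠ 0 := left_ne_zero_of_mul_eq_one ha2
        have hb0 : b ≠ 0 := left_ne_zero_of_mul_eq_one hb2
        have hsubA : gAi = a * q / gA := by rw [eq_div_iff hgA]; linear_combination hAA
        have hsubB : gBi = b * q / gB := by rw [eq_div_iff hgB]; linear_combination hBB
        rw [hsubA, hsubB]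
        field_simp
        ring
  · rw [if_neg habc]
    have hδ : ¬(A = 1 ∧ B * C⁻¹ = 1) := by
      rintro ⟨h1, h2⟩
      exact habc (by rw [mul_assoc, h2, h1, mul_one])
    rw [if_neg hδ, add_zero]
    have hJ : jacobiSum (A * C⁻¹) B =
        gaussSum (A * C⁻¹) ψ * gaussSum B ψ / gaussSum (A * C⁻¹ * B) ψ :=
      jacobiSum_eq_gaussSum_mul_gaussSum_div_gaussSum hq0
        (by rwa [mul_right_comm]) hprim
    rw [hJ, mul_right_comm A C⁻¹ B, mul_zero, zero_div, add_zero]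
    have hgA := gne A
    have hgB := gne B
    have hgC := gne C⁻¹
    have hgAC := gne (A * C⁻¹)
    have hgBC := gne (B * C⁻¹)
    have hgABC := gne (A * B * C⁻¹)
    set q : ℂ := (Fintype.card F : ℂ) with hqdef
    set gA := gaussSum A ψ with hgAdef
    set gB := gaussSum B ψ with hgBdef
    set gC := gaussSum C⁻¹ ψ with hgCdef
    set gAC := gaussSum (A * C⁻¹) ψ with hgACdef
    set gBC := gaussSum (B * C⁻¹) ψ with hgBCdef
    set gABC := gaussSum (A * B * C⁻¹) ψ with hgABCdef
    field_simp
end
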